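/- Let G be a finite p-group with p odd and G powerful (i.e., G/G^p is abelian), generated by a₁,…,a_d. Then the subgroup G^p generated by all p-th powers equals the subgroup generated by a₁^p,…,a_d^p. -/

import Mathlib

open Subgroup
open scoped commutatorElement

namespace PowerfulAux

/-- triangular numbers -/
def Tn : ℕ → ℕ
  | 0 => 0
  | n + 1 => Tn n + n

lemma two_Tn : ∀ n, 2 * Tn (n + 1) = (n + 1) * n := by
  intro n; induction n with
  | zero => rfl
  | succ n ih =>
    show 2 * (Tn (n+1) + (n+1)) = _
    ring_nf
    ring_nf at ih
    linarith

lemma Tn_odd_prime {p : ℕ} (h : Odd p) : ∃ k, Tn p = p * k := by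
  obtain ⟨k, rfl⟩ := h
  refine ⟨k, ?_⟩
  have h1 := two_Tn (2 * k)
  have h2 : (2 * k + 1) * (2 * k) = 2 * ((2 * k + 1) * k) := by ring
  have h3 : 2 * k + 1 = 2 * k + 1 := rfl
  nlinarith [h1, h2]

variable {G : Type*} [Group G]

/-- the subgroup generated by p-th powers -/
def pK (p : ℕ) (G : Type*) [Group G] : Subgroup G :=
  Subgroup.closure {x : G | ∃ g : G, g ^ p = x}

lemma closure_normal_of_conj (S : Set G) (h : ∀ (g : G), ∀ x ∈ S, g * x * g⁻¹ ∈ S) :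
    (Subgroup.closure S).Normal := by
  constructor
  intro n hn g
  induction hn using Subgroup.closure_induction with
  | mem x hx => exact Subgroup.subset_closure (h g x hx)
  | one => simpa using Subgroup.one_mem _
  | mul x y _ _ hx hy =>
    have : g * (x * y) * g⁻¹ = (g * x * g⁻¹) * (g * y * g⁻¹) := by group
    rw [this]; exact Subgroup.mul_mem _ hx hy
  | inv x _ hx =>
    have : g * x⁻¹ * g⁻¹ = (g * x * g⁻¹)⁻¹ := by group
    rw [this]; exact Subgroup.inv_mem _ hx

lemma pK_normal (p : ℕ) : (pK p G).Normal := by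
  apply closure_normal_of_conj
  rintro g x ⟨y, rfl⟩
  exact ⟨g * y * g⁻¹, by rw [conj_pow]⟩

lemma map_pK {H : Type*} [Group H] (p : ℕ) (f : G →* H) (hf : Function.Surjective f) :
    (pK p G).map f = pK p H := by
  rw [pK, pK, MonoidHom.map_closure]
  congr 1
  ext y
  constructor
  · rintro ⟨x, ⟨g, rfl⟩, rfl⟩; exact ⟨f g, (map_pow f g p).symm⟩
  · rintro ⟨h, rfl⟩
    obtain ⟨g, rfl⟩ := hf h
    exact ⟨g ^ p, ⟨g, rfl⟩, map_pow f g p⟩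

/-- key commutator computation -/
lemma aux_pow_comm (x g c D : G)
    (h1 : ∀ w : G, x * (g * w) = c * (g * (x * w)))
    (h2 : ∀ w : G, x * (c * w) = D * (c * (x * w)))
    (hD : ∀ y : G, D * y = y * D) :
    ∀ n : ℕ, x ^ n * g = D ^ Tn n * (c ^ n * (g * x ^ n)) := by
  have hDpull : ∀ y w : G, y * (D * w) = D * (y * w) := by
    intro y w; rw [← mul_assoc, ← hD y, mul_assoc]
  have hDk : ∀ (k : ℕ) (y : G), y * D ^ k = D ^ k * y := by
    intro k y
    induction k with
    | zero => simp
    | succ k ih => rw [pow_succ, ← mul_assoc, ih, mul_assoc, ← hD, ← mul_assoc]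
  have hxcn : ∀ (n : ℕ) (w : G), x * (c ^ n * w) = D ^ n * (c ^ n * (x * w)) := by
    intro n
    induction n with
    | zero => intro w; simp
    | succ n ih =>
      intro w
      rw [pow_succ, mul_assoc, ih (c * w), h2 w, hDpull (c ^ n), ← mul_assoc (D ^ n),
        ← pow_succ, ← mul_assoc (c ^ n), ← pow_succ]
  intro n
  induction n with
  | zero => simp [Tn]
  | succ n ih =>
    have hDkpull : ∀ (k : ℕ) (y w : G), y * (D ^ k * w) = D ^ k * (y * w) := by
      intro k y w; rw [← mul_assoc, hDk, mul_assoc]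
    rw [pow_succ', mul_assoc, ih, hDkpull (Tn n) x, hxcn n (g * x ^ n), h1 (x ^ n),
      ← mul_assoc (c ^ n) c, ← pow_succ, ← mul_assoc (D ^ Tn n), ← pow_add]
    rfl

lemma aux_mul_pow (x y C : G)
    (h1 : ∀ w : G, y * (x * w) = C * (x * (y * w)))
    (hC : ∀ z : G, C * z = z * C) :
    ∀ n : ℕ, (x * y) ^ n = C ^ Tn n * (x ^ n * y ^ n) := by
  have hCk : ∀ (k : ℕ) (z : G), z * C ^ k = C ^ k * z := by
    intro k z
    induction k with
    | zero => simp
    | succ k ih => rw [pow_succ, ← mul_assoc, ih, mul_assoc, ← hC, ← mul_assoc]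
  have hCkpull : ∀ (k : ℕ) (z w : G), z * (C ^ k * w) = C ^ k * (z * w) := by
    intro k z w; rw [← mul_assoc, hCk, mul_assoc]
  have hyxn : ∀ (n : ℕ) (w : G), y ^ n * (x * w) = C ^ n * (x * (y ^ n * w)) := by
    intro n
    induction n with
    | zero => intro w; simp
    | succ n ih =>
      intro w
      rw [pow_succ', mul_assoc, ih w, hCkpull n y, h1 (y ^ n * w), ← mul_assoc y (y ^ n),
        ← pow_succ', ← mul_assoc (C ^ n) C, ← pow_succ]
  intro n
  induction n with
  | zero => simp [Tn]
  | succ n ih =>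
    rw [pow_succ, ih, mul_assoc (C ^ Tn n), mul_assoc (x ^ n), hyxn n y,
      hCkpull n (x ^ n), ← mul_assoc (C ^ Tn n), ← pow_add, ← mul_assoc (x ^ n) x,
      ← pow_succ, ← pow_succ]
    rfl

lemma mul_pow_eq (p : ℕ) (hodd : Odd p) (x y C : G)
    (h1 : ∀ w : G, y * (x * w) = C * (x * (y * w)))
    (hC : ∀ z : G, C * z = z * C) (hCp : C ^ p = 1) :
    (x * y) ^ p = x ^ p * y ^ p := by
  obtain ⟨k, hk⟩ := Tn_odd_prime hodd
  rw [aux_mul_pow x y C h1 hC p, hk, pow_mul, hCp, one_pow, one_mul]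

lemma pow_comm_eq (p : ℕ) (hodd : Odd p) (x g c D : G)
    (h1 : ∀ w : G, x * (g * w) = c * (g * (x * w)))
    (h2 : ∀ w : G, x * (c * w) = D * (c * (x * w)))
    (hD : ∀ y : G, D * y = y * D) (hcp : c ^ p = 1) (hDp : D ^ p = 1) :
    x ^ p * g = g * x ^ p := by
  obtain ⟨k, hk⟩ := Tn_odd_prime hodd
  rw [aux_pow_comm x g c D h1 h2 hD p, hk, pow_mul, hDp, one_pow, one_mul, hcp, one_mul]

universe u

lemma lcs_succ_comm {H : Type u} [Group H] (k : ℕ) :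
    (⊤ : Subgroup H).lowerCentralSeries (k + 1) = ⁅(⊤ : Subgroup H).lowerCentralSeries k, (⊤ : Subgroup H)⁆ := by
  exact Subgroup.lowerCentralSeries_succ _ k

/-- Frattini-type argument: in a finite p-group, a subgroup which together with the
commutator subgroup generates the whole group is the whole group. -/
lemma LEMC {p : ℕ} (hpp : p.Prime) :
    ∀ (n : ℕ) {H : Type u} [Group H] [Finite H], Nat.card H ≤ n → IsPGroup p H →
      ∀ M : Subgroup H, M ⊔ ⁅(⊤ : Subgroup H), ⊤⁆ = ⊤ → M = ⊤ := by
  haveI : Fact p.Prime := ⟨hpp⟩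
  intro n
  induction n with
  | zero =>
    intro H _ _ hcard
    have := Nat.card_pos (α := H)
    omega
  | succ n IH =>
    intro H _ _ hcard hp M hM
    by_cases hC : ⁅(⊤ : Subgroup H), (⊤ : Subgroup H)⁆ = ⊥
    · rw [hC, sup_bot_eq] at hM; exact hM
    haveI : Group.IsNilpotent H := hp.isNilpotent
    have hex : ∃ m, (⊤ : Subgroup H).lowerCentralSeries m = ⊥ := Subgroup.nilpotent_iff_lowerCentralSeries.mp this
    classical
    set m0 := Nat.find hex with hm0def
    have hm0 : (⊤ : Subgroup H).lowerCentralSeries m0 = ⊥ := Nat.find_spec hex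
    have hm0pos : m0 ≠ 0 := by
      intro h
      rw [h, Subgroup.lowerCentralSeries_zero] at hm0
      exact hC (le_bot_iff.mp (hm0 ▸ le_top))
    set Z := (⊤ : Subgroup H).lowerCentralSeries (m0 - 1) with hZdef
    have hZne : Z ≠ ⊥ := Nat.find_min hex (by omega)
    have hZc : ∀ z ∈ Z, ∀ g : H, z * g = g * z := by
      intro z hz g
      have hmem : ⁅z, g⁆ ∈ (⊤ : Subgroup H).lowerCentralSeries (m0 - 1 + 1) := by
        rw [lcs_succ_comm]
        exact Subgroup.commutator_mem_commutator hz (Subgroup.mem_top g)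
      rw [show m0 - 1 + 1 = m0 by omega, hm0, Subgroup.mem_bot] at hmem
      exact commutatorElement_eq_one_iff_mul_comm.mp hmem
    set f := QuotientGroup.mk' Z with hfdef
    have hfs : Function.Surjective f := QuotientGroup.mk'_surjective Z
    have hcardlt : Nat.card (H ⧸ Z) ≤ n := by
      have h1 : Nat.card H = Nat.card (H ⧸ Z) * Nat.card Z :=
        Subgroup.card_eq_card_quotient_mul_card_subgroup Z
      have h2 : 1 < Nat.card Z := (Subgroup.one_lt_card_iff_ne_bot Z).mpr hZne
      have h3 : 0 < Nat.card (H ⧸ Z) := Nat.card_pos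
      nlinarith
    have hq : Subgroup.map f M = ⊤ := by
      have hmap : Subgroup.map f (M ⊔ ⁅(⊤ : Subgroup H), ⊤⁆) = ⊤ := by
        rw [hM]; exact Subgroup.map_top_of_surjective f hfs
      rw [Subgroup.map_sup, Subgroup.map_commutator,
        Subgroup.map_top_of_surjective f hfs] at hmap
      exact IH hcardlt (hp.to_quotient Z) _ hmap
    have hMZ : M ⊔ Z = ⊤ := by
      have := congrArg (Subgroup.comap f) hq
      rwa [Subgroup.comap_map_eq, hfdef, QuotientGroup.ker_mk', Subgroup.comap_top] at this
    have hnorm : Subgroup.normalizer (M : Set H) = ⊤ := by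
      rw [eq_top_iff, ← hMZ]
      refine sup_le Subgroup.le_normalizer ?_
      intro z hz
      rw [Subgroup.mem_normalizer_iff]
      intro h
      have : z * h * z⁻¹ = h := by rw [hZc z hz h, mul_inv_cancel_right]
      rw [this]
    haveI : M.Normal := Subgroup.normalizer_eq_top_iff.mp hnorm
    set f' := QuotientGroup.mk' M with hf'def
    have hf's : Function.Surjective f' := QuotientGroup.mk'_surjective M
    have htop : (⊤ : Subgroup (H ⧸ M)) = Subgroup.map f' Z := by
      rw [← Subgroup.map_top_of_surjective f' hf's, ← hMZ, Subgroup.map_sup]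
      have hbot : Subgroup.map f' M = ⊥ :=
        (Subgroup.map_eq_bot_iff _).mpr (by rw [hf'def, QuotientGroup.ker_mk'])
      rw [hbot, bot_sup_eq]
    have hcomm : ⁅(⊤ : Subgroup (H ⧸ M)), (⊤ : Subgroup (H ⧸ M))⁆ ≤ ⊥ := by
      rw [Subgroup.commutator_le]
      intro g₁ h₁ g₂ h₂
      rw [htop] at h₁ h₂
      obtain ⟨z₁, hz₁, rfl⟩ := h₁
      obtain ⟨z₂, hz₂, rfl⟩ := h₂
      rw [Subgroup.mem_bot]
      rw [commutatorElement_eq_one_iff_mul_comm, ← map_mul, ← map_mul, hZc z₁ hz₁ z₂]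
    have hCM : ⁅(⊤ : Subgroup H), (⊤ : Subgroup H)⁆ ≤ M := by
      have h1 : Subgroup.map f' ⁅(⊤ : Subgroup H), (⊤ : Subgroup H)⁆ = ⊥ := by
        rw [Subgroup.map_commutator, Subgroup.map_top_of_surjective f' hf's]
        exact le_bot_iff.mp hcomm
      have := (Subgroup.map_eq_bot_iff _).mp h1
      rwa [hf'def, QuotientGroup.ker_mk'] at this
    rw [← hM]
    exact (sup_eq_left.mpr hCM).symm

/-- Frattini-type argument: in a finite p-group, a subgroup which together with p-th powers
and commutators generates the whole group is the whole group. -/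
lemma FR {p : ℕ} (hpp : p.Prime) {H : Type u} [Group H] [Finite H] (hp : IsPGroup p H)
    (M : Subgroup H)
    (h : M ⊔ (pK p H ⊔ ⁅(⊤ : Subgroup H), (⊤ : Subgroup H)⁆) = ⊤) : M = ⊤ := by
  haveI : Fact p.Prime := ⟨hpp⟩
  set C := ⁅(⊤ : Subgroup H), (⊤ : Subgroup H)⁆ with hCdef
  set f := QuotientGroup.mk' C with hfdef
  have hfs : Function.Surjective f := QuotientGroup.mk'_surjective C
  have hAcomm : ∀ a b : H ⧸ C, a * b = b * a := by
    intro a b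
    obtain ⟨x, rfl⟩ := hfs a
    obtain ⟨y, rfl⟩ := hfs b
    rw [← map_mul, ← map_mul]
    show ((x * y : H) : H ⧸ C) = ((y * x : H) : H ⧸ C)
    rw [QuotientGroup.eq]
    have hxy : (x * y)⁻¹ * (y * x) = ⁅y⁻¹, x⁻¹⁆ := by
      simp only [commutatorElement_def]; group
    rw [hxy]
    exact Subgroup.commutator_mem_commutator (Subgroup.mem_top _) (Subgroup.mem_top _)
  let ψ : ℕ → (H ⧸ C →* H ⧸ C) := fun m =>
    MonoidHom.mk' (fun a => a ^ m) (fun a b => Commute.mul_pow (hAcomm a b) m)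
  have hψ : ∀ (m : ℕ) (a : H ⧸ C), ψ m a = a ^ m := fun _ _ => rfl
  have hpKA : pK p (H ⧸ C) = (ψ p).range := by
    apply le_antisymm
    · rw [pK, Subgroup.closure_le]
      rintro x ⟨g, rfl⟩
      exact ⟨g, rfl⟩
    · rintro x ⟨g, rfl⟩
      exact Subgroup.subset_closure ⟨g, rfl⟩
  have hcommA : ⁅(⊤ : Subgroup (H ⧸ C)), (⊤ : Subgroup (H ⧸ C))⁆ = ⊥ := by
    rw [eq_bot_iff, Subgroup.commutator_le]
    intro g₁ _ g₂ _
    rw [Subgroup.mem_bot, commutatorElement_eq_one_iff_mul_comm]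
    exact hAcomm g₁ g₂
  have hMA : Subgroup.map f M ⊔ (ψ p).range = ⊤ := by
    have hmap : Subgroup.map f (M ⊔ (pK p H ⊔ C)) = ⊤ := by
      rw [h]; exact Subgroup.map_top_of_surjective f hfs
    rw [Subgroup.map_sup, Subgroup.map_sup, map_pK p f hfs, hpKA] at hmap
    have hfC : Subgroup.map f C = ⊥ :=
      (Subgroup.map_eq_bot_iff _).mpr (by rw [hfdef, QuotientGroup.ker_mk'])
    rwa [hfC, sup_bot_eq] at hmap
  have claim : ∀ k : ℕ, Subgroup.map f M ⊔ (ψ (p ^ k)).range = ⊤ := by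
    intro k
    induction k with
    | zero =>
      have : (ψ (p ^ 0)).range = ⊤ := by
        rw [eq_top_iff]
        intro a _
        exact ⟨a, by rw [hψ, pow_zero, pow_one]⟩
      rw [this, sup_top_eq]
    | succ k ihk =>
      have hcomp : (ψ (p ^ k)).comp (ψ p) = ψ (p ^ (k + 1)) := by
        apply MonoidHom.ext
        intro a
        show (a ^ p) ^ p ^ k = a ^ p ^ (k + 1)
        rw [← pow_mul, ← pow_succ']
      have hr : (ψ (p ^ k)).range ≤ Subgroup.map f M ⊔ (ψ (p ^ (k + 1))).range := by
        rw [MonoidHom.range_eq_map, ← hMA, Subgroup.map_sup]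
        apply sup_le
        · refine le_trans ?_ le_sup_left
          rintro x ⟨y, hy, rfl⟩
          exact Subgroup.pow_mem _ hy _
        · rw [MonoidHom.range_eq_map, Subgroup.map_map, hcomp, ← MonoidHom.range_eq_map]
          exact le_sup_right
      rw [eq_top_iff, ← ihk]
      exact sup_le le_sup_left (le_trans hr (sup_le le_sup_left le_sup_right))
  obtain ⟨n0, hn0⟩ := (IsPGroup.iff_card).mp (hp.to_quotient C)
  have hbot : (ψ (p ^ n0)).range = ⊥ := by
    rw [eq_bot_iff]
    rintro x ⟨a, rfl⟩
    rw [Subgroup.mem_bot, hψ, ← hn0]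
    exact pow_card_eq_one'
  have hMtop : Subgroup.map f M = ⊤ := by
    have := claim n0
    rwa [hbot, sup_bot_eq] at this
  have hMC : M ⊔ C = ⊤ := by
    have := congrArg (Subgroup.comap f) hMtop
    rwa [Subgroup.comap_map_eq, hfdef, QuotientGroup.ker_mk', Subgroup.comap_top] at this
  exact LEMC hpp (Nat.card H) le_rfl hp M hMC

/-- In a powerful finite p-group in which every element of `pK` has order dividing p,
the subgroup `pK` is central. -/
lemma CENT {p : ℕ} (hpp : p.Prime) (hodd : Odd p) :
    ∀ (n : ℕ) {G : Type u} [Group G] [Finite G], Nat.card G ≤ n → IsPGroup p G →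
      ⁅(⊤ : Subgroup G), (⊤ : Subgroup G)⁆ ≤ pK p G → (∀ k ∈ pK p G, k ^ p = 1) →
      ⁅pK p G, (⊤ : Subgroup G)⁆ = ⊥ := by
  haveI : Fact p.Prime := ⟨hpp⟩
  intro n
  induction n with
  | zero =>
    intro G _ _ hcard
    have := Nat.card_pos (α := G)
    omega
  | succ n IH =>
    intro G _ _ hcard hp hpow hK
    haveI hKnorm : (pK p G).Normal := pK_normal p
    haveI hHcnorm : (⁅pK p G, (⊤ : Subgroup G)⁆).Normal := Subgroup.commutator_normal _ _
    by_cases hN₂ : ⁅⁅pK p G, (⊤ : Subgroup G)⁆, (⊤ : Subgroup G)⁆ = ⊥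
    · -- base case: commutators with pK are central
      have hcent : ∀ u ∈ ⁅pK p G, (⊤ : Subgroup G)⁆, ∀ y : G, u * y = y * u := by
        intro u hu y
        have hmem : ⁅u, y⁆ ∈ ⁅⁅pK p G, (⊤ : Subgroup G)⁆, (⊤ : Subgroup G)⁆ :=
          Subgroup.commutator_mem_commutator hu (Subgroup.mem_top y)
        rw [hN₂, Subgroup.mem_bot] at hmem
        exact commutatorElement_eq_one_iff_mul_comm.mp hmem
      have hHcK : ⁅pK p G, (⊤ : Subgroup G)⁆ ≤ pK p G :=
        Subgroup.commutator_le_left _ _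
      have hpowc : ∀ x g1 : G, x ^ p * g1 = g1 * x ^ p := by
        intro x g1
        have hcK : ⁅x, g1⁆ ∈ pK p G :=
          hpow (Subgroup.commutator_mem_commutator (Subgroup.mem_top x) (Subgroup.mem_top g1))
        have hDmem : ⁅x, ⁅x, g1⁆⁆ ∈ ⁅pK p G, (⊤ : Subgroup G)⁆ := by
          rw [← commutatorElement_inv]
          exact Subgroup.inv_mem _
            (Subgroup.commutator_mem_commutator hcK (Subgroup.mem_top x))
        have hDK : ⁅x, ⁅x, g1⁆⁆ ∈ pK p G := hHcK hDmem
        have hDc : ∀ y : G, ⁅x, ⁅x, g1⁆⁆ * y = y * ⁅x, ⁅x, g1⁆⁆ := hcent _ hDmem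
        have h1 : ∀ w : G, x * (g1 * w) = ⁅x, g1⁆ * (g1 * (x * w)) := by
          intro w; simp only [commutatorElement_def]; group
        have h2 : ∀ w : G, x * (⁅x, g1⁆ * w) = ⁅x, ⁅x, g1⁆⁆ * (⁅x, g1⁆ * (x * w)) := by
          intro w; simp only [commutatorElement_def]; group
        exact pow_comm_eq p hodd x g1 ⁅x, g1⁆ ⁅x, ⁅x, g1⁆⁆ h1 h2 hDc (hK _ hcK) (hK _ hDK)
      have hcenter : pK p G ≤ Subgroup.center G := by
        rw [pK, Subgroup.closure_le]
        rintro x ⟨g2, rfl⟩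
        rw [SetLike.mem_coe, Subgroup.mem_center_iff]
        exact fun y => (hpowc g2 y).symm
      rw [eq_bot_iff, Subgroup.commutator_le]
      intro k hk g _
      rw [Subgroup.mem_bot, commutatorElement_eq_one_iff_mul_comm]
      exact (Subgroup.mem_center_iff.mp (hcenter hk) g).symm
    · -- quotient by the nontrivial normal subgroup N₂
      haveI hN₂norm : (⁅⁅pK p G, (⊤ : Subgroup G)⁆, (⊤ : Subgroup G)⁆).Normal :=
        Subgroup.commutator_normal _ _
      set f := QuotientGroup.mk' ⁅⁅pK p G, (⊤ : Subgroup G)⁆, (⊤ : Subgroup G)⁆ with hfdef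
      have hfs : Function.Surjective f := QuotientGroup.mk'_surjective _
      have hcardlt : Nat.card (G ⧸ ⁅⁅pK p G, (⊤ : Subgroup G)⁆, (⊤ : Subgroup G)⁆) ≤ n := by
        have h1 := Subgroup.card_eq_card_quotient_mul_card_subgroup
          ⁅⁅pK p G, (⊤ : Subgroup G)⁆, (⊤ : Subgroup G)⁆
        have h2 := (Subgroup.one_lt_card_iff_ne_bot _).mpr hN₂
        have h3 : 0 < Nat.card (G ⧸ ⁅⁅pK p G, (⊤ : Subgroup G)⁆, (⊤ : Subgroup G)⁆) :=
          Nat.card_pos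
        nlinarith
      have hpowQ : ⁅(⊤ : Subgroup (G ⧸ ⁅⁅pK p G, (⊤ : Subgroup G)⁆, (⊤ : Subgroup G)⁆)),
            (⊤ : Subgroup (G ⧸ ⁅⁅pK p G, (⊤ : Subgroup G)⁆, (⊤ : Subgroup G)⁆))⁆ ≤
          pK p (G ⧸ ⁅⁅pK p G, (⊤ : Subgroup G)⁆, (⊤ : Subgroup G)⁆) := by
        rw [← Subgroup.map_top_of_surjective f hfs, ← Subgroup.map_commutator,
          ← map_pK p f hfs]
        exact Subgroup.map_mono hpow
      have hKQ : ∀ k ∈ pK p (G ⧸ ⁅⁅pK p G, (⊤ : Subgroup G)⁆, (⊤ : Subgroup G)⁆),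
          k ^ p = 1 := by
        intro k hk
        rw [← map_pK p f hfs] at hk
        obtain ⟨y, hy, rfl⟩ := hk
        rw [← map_pow, hK y hy, map_one]
      have hQ := IH hcardlt (hp.to_quotient _) hpowQ hKQ
      have h1 : Subgroup.map f ⁅pK p G, (⊤ : Subgroup G)⁆ = ⊥ := by
        rw [Subgroup.map_commutator, map_pK p f hfs, Subgroup.map_top_of_surjective f hfs, hQ]
      have h2 : ⁅pK p G, (⊤ : Subgroup G)⁆ ≤ ⁅⁅pK p G, (⊤ : Subgroup G)⁆, (⊤ : Subgroup G)⁆ := by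
        have := (Subgroup.map_eq_bot_iff _).mp h1
        rwa [hfdef, QuotientGroup.ker_mk'] at this
      have h4 : ∀ m, ⁅pK p G, (⊤ : Subgroup G)⁆ ≤ (⊤ : Subgroup G).lowerCentralSeries m := by
        intro m
        induction m with
        | zero => rw [Subgroup.lowerCentralSeries_zero]; exact le_top
        | succ m ih =>
          rw [lcs_succ_comm]
          exact le_trans h2 (Subgroup.commutator_mono ih le_rfl)
      haveI : Group.IsNilpotent G := hp.isNilpotent
      obtain ⟨m, hm⟩ := Subgroup.nilpotent_iff_lowerCentralSeries.mp this
      exact le_bot_iff.mp (hm ▸ h4 m)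

/-- main induction -/
lemma MAIN {p : ℕ} (hpp : p.Prime) (hodd : Odd p) :
    ∀ (n : ℕ) {G : Type u} [Group G] [Finite G], Nat.card G ≤ n → IsPGroup p G →
      ⁅(⊤ : Subgroup G), (⊤ : Subgroup G)⁆ ≤ pK p G → ∀ {d : ℕ} (a : Fin d → G),
        Subgroup.closure (Set.range a) = ⊤ →
        pK p G = Subgroup.closure (Set.range fun i => a i ^ p) := by
  haveI : Fact p.Prime := ⟨hpp⟩
  intro n
  induction n with
  | zero =>
    intro G _ _ hcard
    have := Nat.card_pos (α := G)
    omega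
  | succ n IH =>
    intro G _ _ hcard hp hpow d a ha
    haveI hKnorm : (pK p G).Normal := pK_normal p
    haveI hclnorm : (Subgroup.closure {x : G | ∃ k ∈ pK p G, k ^ p = x}).Normal := by
      apply closure_normal_of_conj
      rintro g x ⟨k, hk, rfl⟩
      exact ⟨g * k * g⁻¹, hKnorm.conj_mem k hk g, conj_pow ..⟩
    haveI hcomnorm : (⁅pK p G, pK p G⁆).Normal := Subgroup.commutator_normal _ _
    haveI hN₁norm :
        ((Subgroup.closure {x : G | ∃ k ∈ pK p G, k ^ p = x}) ⊔ ⁅pK p G, pK p G⁆).Normal :=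
      Subgroup.sup_normal _ _
    have hMK : Subgroup.closure (Set.range fun i => a i ^ p) ≤ pK p G := by
      rw [Subgroup.closure_le]
      rintro x ⟨i, rfl⟩
      exact Subgroup.subset_closure ⟨a i, rfl⟩
    have hN₁K : (Subgroup.closure {x : G | ∃ k ∈ pK p G, k ^ p = x}) ⊔ ⁅pK p G, pK p G⁆ ≤
        pK p G := by
      apply sup_le
      · rw [Subgroup.closure_le]
        rintro x ⟨k, _, rfl⟩
        exact Subgroup.subset_closure ⟨k, rfl⟩
      · exact Subgroup.commutator_le_left _ _
    by_cases hN :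
        (Subgroup.closure {x : G | ∃ k ∈ pK p G, k ^ p = x}) ⊔ ⁅pK p G, pK p G⁆ = ⊥
    · -- pK is central of exponent p, the p-th power map is a homomorphism
      have hKp : ∀ k ∈ pK p G, k ^ p = 1 := by
        intro k hk
        have hmem : k ^ p ∈
            (Subgroup.closure {x : G | ∃ k ∈ pK p G, k ^ p = x}) ⊔ ⁅pK p G, pK p G⁆ :=
          Subgroup.mem_sup_left (Subgroup.subset_closure ⟨k, hk, rfl⟩)
        rwa [hN, Subgroup.mem_bot] at hmem
      have hcent := CENT hpp hodd (Nat.card G) le_rfl hp hpow hKp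
      have hKcentral : ∀ k ∈ pK p G, ∀ y : G, k * y = y * k := by
        intro k hk y
        have hmem : ⁅k, y⁆ ∈ ⁅pK p G, (⊤ : Subgroup G)⁆ :=
          Subgroup.commutator_mem_commutator hk (Subgroup.mem_top y)
        rw [hcent, Subgroup.mem_bot] at hmem
        exact commutatorElement_eq_one_iff_mul_comm.mp hmem
      have hhom : ∀ x y : G, (x * y) ^ p = x ^ p * y ^ p := by
        intro x y
        have hCK : ⁅y, x⁆ ∈ pK p G :=
          hpow (Subgroup.commutator_mem_commutator (Subgroup.mem_top y) (Subgroup.mem_top x))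
        have h1 : ∀ w : G, y * (x * w) = ⁅y, x⁆ * (x * (y * w)) := by
          intro w; simp only [commutatorElement_def]; group
        exact mul_pow_eq p hodd x y ⁅y, x⁆ h1 (fun z => hKcentral _ hCK z) (hKp _ hCK)
      let φ : G →* G := MonoidHom.mk' (fun g => g ^ p) (fun x y => hhom x y)
      have hKr : pK p G = φ.range := by
        rw [pK]
        have hset : {x : G | ∃ g : G, g ^ p = x} = Set.range ⇑φ := rfl
        rw [hset, ← MonoidHom.coe_range, Subgroup.closure_eq]
      rw [hKr, MonoidHom.range_eq_map, ← ha, MonoidHom.map_closure, ← Set.range_comp]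
      rfl
    · -- quotient by the nontrivial normal subgroup N₁
      set f := QuotientGroup.mk'
        ((Subgroup.closure {x : G | ∃ k ∈ pK p G, k ^ p = x}) ⊔ ⁅pK p G, pK p G⁆) with hfdef
      have hfs : Function.Surjective f := QuotientGroup.mk'_surjective _
      have hcardlt : Nat.card (G ⧸
          ((Subgroup.closure {x : G | ∃ k ∈ pK p G, k ^ p = x}) ⊔ ⁅pK p G, pK p G⁆)) ≤ n := by
        have h1 := Subgroup.card_eq_card_quotient_mul_card_subgroup
          ((Subgroup.closure {x : G | ∃ k ∈ pK p G, k ^ p = x}) ⊔ ⁅pK p G, pK p G⁆)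
        have h2 := (Subgroup.one_lt_card_iff_ne_bot _).mpr hN
        have h3 : 0 < Nat.card (G ⧸
            ((Subgroup.closure {x : G | ∃ k ∈ pK p G, k ^ p = x}) ⊔ ⁅pK p G, pK p G⁆)) :=
          Nat.card_pos
        nlinarith
      have hpowQ : ⁅(⊤ : Subgroup (G ⧸
            ((Subgroup.closure {x : G | ∃ k ∈ pK p G, k ^ p = x}) ⊔ ⁅pK p G, pK p G⁆))),
            (⊤ : Subgroup (G ⧸
            ((Subgroup.closure {x : G | ∃ k ∈ pK p G, k ^ p = x}) ⊔ ⁅pK p G, pK p G⁆)))⁆ ≤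
          pK p (G ⧸
            ((Subgroup.closure {x : G | ∃ k ∈ pK p G, k ^ p = x}) ⊔ ⁅pK p G, pK p G⁆)) := by
        rw [← Subgroup.map_top_of_surjective f hfs, ← Subgroup.map_commutator,
          ← map_pK p f hfs]
        exact Subgroup.map_mono hpow
      have haQ : Subgroup.closure (Set.range fun i => f (a i)) = ⊤ := by
        rw [← Subgroup.map_top_of_surjective f hfs, ← ha, MonoidHom.map_closure,
          ← Set.range_comp]
        rfl
      have hQ : pK p (G ⧸
            ((Subgroup.closure {x : G | ∃ k ∈ pK p G, k ^ p = x}) ⊔ ⁅pK p G, pK p G⁆)) =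
          Subgroup.closure (Set.range fun i => f (a i) ^ p) :=
        IH hcardlt (hp.to_quotient _) hpowQ (fun i => f (a i)) haQ
      have hmapM : Subgroup.map f (Subgroup.closure (Set.range fun i => a i ^ p)) =
          Subgroup.closure (Set.range fun i => f (a i) ^ p) := by
        rw [MonoidHom.map_closure, ← Set.range_comp]
        have : (⇑f ∘ fun i => a i ^ p) = fun i => f (a i) ^ p :=
          funext fun i => map_pow f (a i) p
        rw [this]
      have heq : Subgroup.map f (pK p G) =
          Subgroup.map f (Subgroup.closure (Set.range fun i => a i ^ p)) := by
        rw [map_pK p f hfs, hQ, hmapM]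
      have hsupeq : pK p G ⊔
          ((Subgroup.closure {x : G | ∃ k ∈ pK p G, k ^ p = x}) ⊔ ⁅pK p G, pK p G⁆) =
          Subgroup.closure (Set.range fun i => a i ^ p) ⊔
          ((Subgroup.closure {x : G | ∃ k ∈ pK p G, k ^ p = x}) ⊔ ⁅pK p G, pK p G⁆) := by
        have := congrArg (Subgroup.comap f) heq
        rwa [Subgroup.comap_map_eq, Subgroup.comap_map_eq, hfdef, QuotientGroup.ker_mk']
          at this
      have hKMN : pK p G = Subgroup.closure (Set.range fun i => a i ^ p) ⊔
          ((Subgroup.closure {x : G | ∃ k ∈ pK p G, k ^ p = x}) ⊔ ⁅pK p G, pK p G⁆) := by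
        rw [← hsupeq]
        exact (sup_eq_left.mpr hN₁K).symm
      -- Frattini argument inside K := pK p G
      have hmapM' : Subgroup.map (pK p G).subtype
          ((Subgroup.closure (Set.range fun i => a i ^ p)).subgroupOf (pK p G)) =
          Subgroup.closure (Set.range fun i => a i ^ p) := by
        rw [Subgroup.subgroupOf_map_subtype, inf_eq_left.mpr hMK]
      have hmapP : Subgroup.map (pK p G).subtype (pK p ↥(pK p G)) =
          Subgroup.closure {x : G | ∃ k ∈ pK p G, k ^ p = x} := by
        show Subgroup.map (pK p G).subtype (Subgroup.closure {x : ↥(pK p G) | ∃ g, g ^ p = x}) = _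
        rw [MonoidHom.map_closure]
        congr 1
        ext x
        constructor
        · rintro ⟨y, ⟨h0, rfl⟩, rfl⟩
          exact ⟨(h0 : G), h0.2, by simp⟩
        · rintro ⟨k, hk, rfl⟩
          exact ⟨(⟨k, hk⟩ : pK p G) ^ p, ⟨⟨k, hk⟩, rfl⟩, by simp⟩
      have hmapC : Subgroup.map (pK p G).subtype
          ⁅(⊤ : Subgroup ↥(pK p G)), (⊤ : Subgroup ↥(pK p G))⁆ = ⁅pK p G, pK p G⁆ := by
        rw [Subgroup.map_commutator, ← MonoidHom.range_eq_map, Subgroup.range_subtype]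
      have htot : Subgroup.map (pK p G).subtype
          (((Subgroup.closure (Set.range fun i => a i ^ p)).subgroupOf (pK p G)) ⊔
            (pK p ↥(pK p G) ⊔ ⁅(⊤ : Subgroup ↥(pK p G)), (⊤ : Subgroup ↥(pK p G))⁆)) =
          Subgroup.map (pK p G).subtype ⊤ := by
        rw [Subgroup.map_sup, Subgroup.map_sup, hmapM', hmapP, hmapC,
          ← MonoidHom.range_eq_map, Subgroup.range_subtype, ← hKMN]
      have htot' := Subgroup.map_injective (Subgroup.subtype_injective (pK p G)) htot
      have hM' := FR hpp (hp.to_subgroup (pK p G))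
        ((Subgroup.closure (Set.range fun i => a i ^ p)).subgroupOf (pK p G)) htot'
      rw [← hmapM', hM', ← MonoidHom.range_eq_map, Subgroup.range_subtype]

end PowerfulAux

/-- For an odd prime `p` and a powerful finite `p`-group `G` generated by
`a 0, …, a (d-1)`, the subgroup generated by `p`-th powers equals the subgroup
generated by `(a i)^p`. -/
theorem powerful_pPow_eq_closure_gen_pows
    (p : ℕ) (hp : p.Prime) (hodd : Odd p)
    (G : Type*) [Group G] [Finite G] (hpG : IsPGroup p G)
    (hpow : ⁅(⊤ : Subgroup G), (⊤ : Subgroup G)⁆ ≤ Subgroup.closure {x : G | ∃ g : G, g ^ p = x})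
    (d : ℕ) (a : Fin d → G) (ha : Subgroup.closure (Set.range a) = ⊤) :
    Subgroup.closure {x : G | ∃ g : G, g ^ p = x} =
      Subgroup.closure (Set.range fun i => a i ^ p) :=
  PowerfulAux.MAIN hp hodd (Nat.card G) le_rfl hpG hpow a ha
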